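/- Fix symmetric positive definite real 3×3 matrices C and Cᵢ⁰ with det Cᵢ⁰ = 1, constants c₁₀ > 0, c₀₁ ≥ 0 and η > 0, and set C̄ := (det C)^{-1/3}·C. For Δt > 0 define the IFEBM update: λ := Δt·c₁₀/η, ε := Δt·c₀₁/η, A := C̄^{-1/2}·(Cᵢ⁰ + λ·C̄)·C̄^{-1/2}, φ₀ := (det A)^{1/3}, φ := φ₀ − (tr A/(3φ₀))·ε, X(Δt) := 2·A·(sqrt(φ²·I + 4ε·A) + φ·I)⁻¹, and Cᵢ(Δt) := (det(C^{1/2}·X(Δt)·C^{1/2}))^{-1/3}·C^{1/2}·X(Δt)·C^{1/2}. Then X(Δt) → I and Cᵢ(Δt) → C̄ as Δt → ∞. That is, the iteration-free Euler backward method reproduces complete stress relaxation in the limit of infinitely large time steps. -/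

import Mathlib

open Matrix Filter

abbrev Mat := Matrix (Fin 3) (Fin 3) ℝ

/-- The unimodular part of a matrix. -/
noncomputable def unimod (M : Mat) : Mat := (M.det ^ (-(1 : ℝ) / 3)) • M

/-- The unique positive semidefinite square root of a positive semidefinite matrix
(junk value `0` on matrices that are not positive semidefinite). -/
noncomputable def msqrt (M : Mat) : Mat := by
  classical exact if h : M.PosSemidef then
    h.1.eigenvectorUnitary.1 * diagonal ((↑) ∘ (√·) ∘ h.1.eigenvalues) *
      (star h.1.eigenvectorUnitary : Mat) else 0

/-- The matrix `A = C̄^{-1/2}·(Cᵢ⁰ + λ·C̄)·C̄^{-1/2}` of the IFEBM update. -/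
noncomputable def ifebmA (lam : ℝ) (C Ci : Mat) : Mat :=
  (msqrt (unimod C))⁻¹ * (Ci + lam • unimod C) * (msqrt (unimod C))⁻¹

/-- The scalar `φ = φ₀ − (tr A/(3φ₀))·ε` of the IFEBM update, `φ₀ = (det A)^{1/3}`. -/
noncomputable def ifebmPhi (lam eps : ℝ) (C Ci : Mat) : ℝ :=
  (ifebmA lam C Ci).det ^ ((1 : ℝ) / 3) -
    (ifebmA lam C Ci).trace / (3 * (ifebmA lam C Ci).det ^ ((1 : ℝ) / 3)) * eps

/-- The matrix `X = 2·A·(sqrt(φ²·I + 4ε·A) + φ·I)⁻¹` of the IFEBM update. -/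
noncomputable def ifebmX (lam eps : ℝ) (C Ci : Mat) : Mat :=
  (2 : ℝ) • ifebmA lam C Ci *
    (msqrt ((ifebmPhi lam eps C Ci) ^ 2 • (1 : Mat) + (4 * eps) • ifebmA lam C Ci) +
      (ifebmPhi lam eps C Ci) • (1 : Mat))⁻¹

/-- The IFEBM updated internal variable `Cᵢ = unimod (C^{1/2}·X·C^{1/2})`. -/
noncomputable def ifebmCi (lam eps : ℝ) (C Ci : Mat) : Mat :=
  unimod (msqrt C * ifebmX lam eps C Ci * msqrt C)


/-! ### Auxiliary material for the proof -/

noncomputable def phiS (b : Fin 3 → ℝ) (lam eps : ℝ) : ℝ :=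
  (∏ i, (b i + lam)) ^ ((1:ℝ)/3) -
    (∑ i, (b i + lam)) / (3 * (∏ i, (b i + lam)) ^ ((1:ℝ)/3)) * eps

namespace IFEBMaux

open scoped MatrixOrder in
lemma msqrt_eq_sqrt {M : Mat} (hM : M.PosSemidef) : msqrt M = CFC.sqrt M := by
  rw [CFC.sqrt_eq_real_sqrt M hM.nonneg, cfcₙ_eq_cfc, hM.1.cfc_eq, msqrt, dif_pos hM]
  simp [IsHermitian.cfc]
  rfl

open scoped MatrixOrder in
lemma msqrt_psd {M : Mat} (hM : M.PosSemidef) : (msqrt M).PosSemidef := by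
  rw [msqrt_eq_sqrt hM]
  exact Matrix.nonneg_iff_posSemidef.mp (CFC.sqrt_nonneg M)

open scoped MatrixOrder in
lemma msqrt_mul_self {M : Mat} (hM : M.PosSemidef) : msqrt M * msqrt M = M := by
  rw [msqrt_eq_sqrt hM]
  exact CFC.sqrt_mul_sqrt_self M hM.nonneg

open scoped MatrixOrder in
lemma msqrt_eq {M N : Mat} (hN : N.PosSemidef) (h : N ^ 2 = M) : msqrt M = N := by
  have hM : M.PosSemidef := h ▸ hN.pow 2
  rw [msqrt_eq_sqrt hM, ← h]
  exact CFC.sqrt_sq N hN.nonneg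

lemma posDef_smul {M : Mat} (hM : M.PosDef) {c : ℝ} (hc : 0 < c) : (c • M).PosDef := by
  refine ⟨?_, fun x hx => ?_⟩
  · unfold Matrix.IsHermitian
    rw [conjTranspose_smul, hM.1.eq, star_trivial]
  · exact (hM.smul hc).2 hx

lemma unimod_det {M : Mat} (hM : M.PosDef) : (unimod M).det = 1 := by
  rw [unimod, det_smul]
  have h3 : (Fintype.card (Fin 3) : ℕ) = 3 := rfl
  rw [h3, ← Real.rpow_natCast (M.det ^ (-(1:ℝ)/3)) 3, ← Real.rpow_mul hM.det_pos.le]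
  norm_num
  rw [Real.rpow_neg_one]
  exact inv_mul_cancel₀ hM.det_pos.ne'

variable {U : Mat}

lemma uc_mul (h2 : star U * U = 1) (d e : Fin 3 → ℝ) :
    (U * diagonal d * star U) * (U * diagonal e * star U) = U * diagonal (d * e) * star U := by
  simp only [mul_assoc]
  have h : star U * (U * (diagonal e * star U)) = diagonal e * star U := by
    rw [← mul_assoc, h2, one_mul]
  rw [h, ← mul_assoc (diagonal d), diagonal_mul_diagonal]
  rfl

lemma uc_one (h1 : U * star U = 1) : (1 : Mat) = U * diagonal 1 * star U := by
  have h : diagonal (1 : Fin 3 → ℝ) = (1 : Mat) := diagonal_one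
  rw [h, mul_one, h1]

lemma uc_det (h2 : star U * U = 1) (d : Fin 3 → ℝ) :
    (U * diagonal d * star U).det = ∏ i, d i := by
  rw [det_mul, det_mul, mul_comm, ← mul_assoc, ← det_mul, h2, det_one, one_mul, det_diagonal]

lemma uc_trace (h2 : star U * U = 1) (d : Fin 3 → ℝ) :
    (U * diagonal d * star U).trace = ∑ i, d i := by
  rw [trace_mul_comm, ← mul_assoc, h2, one_mul, trace_diagonal]

lemma uc_inv (h1 : U * star U = 1) (h2 : star U * U = 1) {d : Fin 3 → ℝ} (hd : ∀ i, d i ≠ 0) :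
    (U * diagonal d * star U)⁻¹ = U * diagonal d⁻¹ * star U := by
  refine inv_eq_right_inv ?_
  rw [uc_mul h2]
  have h : d * d⁻¹ = 1 := funext fun i => mul_inv_cancel₀ (hd i)
  rw [h, ← uc_one h1]

lemma uc_psd {d : Fin 3 → ℝ} (hd : ∀ i, 0 ≤ d i) : (U * diagonal d * star U).PosSemidef := by
  have : (diagonal d).PosSemidef := posSemidef_diagonal_iff.mpr hd
  simpa [Matrix.star_eq_conjTranspose] using this.mul_mul_conjTranspose_same U

lemma uc_msqrt (h2 : star U * U = 1) {d : Fin 3 → ℝ} (hd : ∀ i, 0 ≤ d i) :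
    msqrt (U * diagonal d * star U) = U * diagonal (fun i => Real.sqrt (d i)) * star U := by
  refine msqrt_eq (uc_psd fun i => Real.sqrt_nonneg _) ?_
  rw [pow_two, uc_mul h2]
  have h : ((fun i => Real.sqrt (d i)) * fun i => Real.sqrt (d i)) = d :=
    funext fun i => Real.mul_self_sqrt (hd i)
  rw [h]

lemma uc_add (d e : Fin 3 → ℝ) :
    (U * diagonal d * star U) + (U * diagonal e * star U) = U * diagonal (d + e) * star U := by
  have h : (d + e) = fun i => d i + e i := rfl
  rw [h, ← diagonal_add, mul_add, add_mul]

lemma uc_smul (c : ℝ) (d : Fin 3 → ℝ) :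
    c • (U * diagonal d * star U) = U * diagonal (c • d) * star U := by
  simp [diagonal_smul, smul_mul_assoc, mul_smul_comm]

lemma lim_q (b0 : ℝ) : Tendsto (fun l : ℝ => (b0 + l)/l) atTop (nhds 1) := by
  have h : Tendsto (fun l : ℝ => b0 * l⁻¹ + 1) atTop (nhds 1) := by
    have := (tendsto_inv_atTop_zero (𝕜 := ℝ)).const_mul b0
    simpa using this.add (tendsto_const_nhds (x := (1:ℝ)))
  refine h.congr' ?_
  filter_upwards [eventually_gt_atTop (0:ℝ)] with l hl
  field_simp

lemma ev_pos (b : Fin 3 → ℝ) : ∀ᶠ l : ℝ in atTop, 0 < l ∧ ∀ i, 0 < b i + l := by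
  have h0 := eventually_gt_atTop (0:ℝ)
  have h1 := eventually_gt_atTop (-(b 0))
  have h2 := eventually_gt_atTop (-(b 1))
  have h3 := eventually_gt_atTop (-(b 2))
  filter_upwards [h0, h1, h2, h3] with l l0 la lb lc
  refine ⟨l0, fun i => ?_⟩
  fin_cases i <;> simpa [neg_lt_iff_pos_add'] using by linarith

lemma lim_prodq (b : Fin 3 → ℝ) :
    Tendsto (fun l : ℝ => ∏ i, ((b i + l)/l)) atTop (nhds 1) := by
  have := tendsto_finset_prod (Finset.univ : Finset (Fin 3))
    (f := fun i (l : ℝ) => (b i + l)/l) (fun i _ => lim_q (b i))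
  simpa using this

lemma lim_P (b : Fin 3 → ℝ) :
    Tendsto (fun l : ℝ => (∏ i, (b i + l)) ^ ((1:ℝ)/3) / l) atTop (nhds 1) := by
  have hc : Tendsto (fun x : ℝ => x ^ ((1:ℝ)/3)) (nhds 1) (nhds 1) := by
    have := (Real.continuousAt_rpow_const 1 ((1:ℝ)/3) (Or.inl one_ne_zero)).tendsto
    simpa using this
  have h := hc.comp (lim_prodq b)
  refine h.congr' ?_
  filter_upwards [ev_pos b] with l ⟨l0, lb⟩
  have hprod : (0:ℝ) ≤ ∏ i, (b i + l) := Finset.prod_nonneg fun i _ => (lb i).le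
  have hl3 : ∏ _i : Fin 3, l = l ^ (3:ℕ) := by simp [Finset.prod_const]
  have h4 : (∏ i, ((b i + l)/l)) = (∏ i, (b i + l)) / l ^ (3:ℕ) := by
    rw [Finset.prod_div_distrib, hl3]
  rw [Function.comp_apply, h4, Real.div_rpow hprod (by positivity)]
  congr 1
  rw [← Real.rpow_natCast l 3, ← Real.rpow_mul l0.le]
  norm_num

lemma lim_S (b : Fin 3 → ℝ) :
    Tendsto (fun l : ℝ => (∑ i, (b i + l))/l) atTop (nhds 3) := by
  have := tendsto_finset_sum (Finset.univ : Finset (Fin 3))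
    (f := fun i (l : ℝ) => (b i + l)/l) (fun i _ => lim_q (b i))
  have h : Tendsto (fun l : ℝ => ∑ i, ((b i + l)/l)) atTop (nhds 3) := by
    simpa using this
  refine h.congr ?_
  intro l
  rw [Finset.sum_div]

lemma lim_phi (b : Fin 3 → ℝ) (r : ℝ) :
    Tendsto (fun l : ℝ => phiS b l (r*l) / l) atTop (nhds (1-r)) := by
  have hden : Tendsto (fun l : ℝ => 3 * ((∏ i, (b i + l)) ^ ((1:ℝ)/3) / l)) atTop
      (nhds 3) := by simpa using (lim_P b).const_mul 3
  have h2 : Tendsto (fun l : ℝ =>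
      ((∑ i, (b i + l))/l) / (3 * ((∏ i, (b i + l)) ^ ((1:ℝ)/3) / l)) * r) atTop
      (nhds r) := by
    have := ((lim_S b).div hden (by norm_num)).mul_const r
    simpa using this
  have h := (lim_P b).sub h2
  refine h.congr' ?_
  filter_upwards [ev_pos b] with l ⟨l0, lb⟩
  have hprod : (0:ℝ) < ∏ i, (b i + l) := Finset.prod_pos fun i _ => lb i
  have hP : (0:ℝ) < (∏ i, (b i + l)) ^ ((1:ℝ)/3) := Real.rpow_pos_of_pos hprod _
  rw [phiS]
  field_simp

lemma lim_inner (b : Fin 3 → ℝ) (r : ℝ) (i : Fin 3) :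
    Tendsto (fun l : ℝ => ((phiS b l (r*l))^2 + 4*(r*l)*(b i + l)) / l^2) atTop
      (nhds ((1+r)^2)) := by
  have h : Tendsto (fun l : ℝ => (phiS b l (r*l)/l)^2 + 4*r*((b i + l)/l)) atTop
      (nhds ((1-r)^2 + 4*r*1)) :=
    ((lim_phi b r).pow 2).add (((lim_q (b i)).const_mul (4*r)).congr (by intro l; ring))
  have he : (1-r)^2 + 4*r*1 = (1+r)^2 := by ring
  rw [he] at h
  refine h.congr' ?_
  filter_upwards [eventually_gt_atTop (0:ℝ)] with l l0
  field_simp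

lemma ev_inner_pos (b : Fin 3 → ℝ) (r : ℝ) (hr : 0 ≤ r) (i : Fin 3) :
    ∀ᶠ l : ℝ in atTop, 0 < (phiS b l (r*l))^2 + 4*(r*l)*(b i + l) := by
  have h := (lim_inner b r i).eventually (eventually_gt_nhds
    (show (0:ℝ) < (1+r)^2 by positivity))
  filter_upwards [h, eventually_gt_atTop (0:ℝ)] with l hq l0
  have hm := mul_pos hq (pow_pos l0 2)
  calc (0:ℝ) < ((phiS b l (r*l))^2 + 4*(r*l)*(b i + l)) / l^2 * l^2 := hm
    _ = (phiS b l (r*l))^2 + 4*(r*l)*(b i + l) := by field_simp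

lemma lim_den (b : Fin 3 → ℝ) (r : ℝ) (hr : 0 ≤ r) (i : Fin 3) :
    Tendsto (fun l : ℝ =>
      (Real.sqrt ((phiS b l (r*l))^2 + 4*(r*l)*(b i + l)) + phiS b l (r*l)) / l) atTop
      (nhds 2) := by
  have hs : Tendsto (fun l : ℝ =>
      Real.sqrt (((phiS b l (r*l))^2 + 4*(r*l)*(b i + l)) / l^2)) atTop (nhds (1+r)) := by
    have := (Real.continuous_sqrt.tendsto ((1+r)^2)).comp (lim_inner b r i)
    rwa [Real.sqrt_sq (by linarith)] at this
  have h := hs.add (lim_phi b r)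
  rw [show (1+r)+(1-r) = (2:ℝ) by ring] at h
  refine h.congr' ?_
  filter_upwards [eventually_gt_atTop (0:ℝ), ev_inner_pos b r hr i] with l l0 hin
  rw [Real.sqrt_div hin.le, Real.sqrt_sq l0.le, ← add_div]

lemma ev_den_pos (b : Fin 3 → ℝ) (r : ℝ) (hr : 0 ≤ r) (i : Fin 3) :
    ∀ᶠ l : ℝ in atTop,
      0 < Real.sqrt ((phiS b l (r*l))^2 + 4*(r*l)*(b i + l)) + phiS b l (r*l) := by
  have h := (lim_den b r hr i).eventually (eventually_gt_nhds (show (0:ℝ) < 2 by norm_num))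
  filter_upwards [h, eventually_gt_atTop (0:ℝ)] with l hq l0
  have hm := mul_pos hq l0
  calc (0:ℝ) < (Real.sqrt ((phiS b l (r*l))^2 + 4*(r*l)*(b i + l)) + phiS b l (r*l)) / l * l :=
        hm
    _ = _ := by field_simp

lemma lim_x (b : Fin 3 → ℝ) (r : ℝ) (hr : 0 ≤ r) (i : Fin 3) :
    Tendsto (fun l : ℝ =>
      2*(b i + l) / (Real.sqrt ((phiS b l (r*l))^2 + 4*(r*l)*(b i + l)) + phiS b l (r*l)))
      atTop (nhds 1) := by
  have hnum : Tendsto (fun l : ℝ => 2*((b i + l)/l)) atTop (nhds 2) := by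
    simpa using (lim_q (b i)).const_mul 2
  have h := hnum.div (lim_den b r hr i) (by norm_num)
  have h2 : Tendsto (fun l : ℝ =>
      (2*((b i + l)/l)) /
      ((Real.sqrt ((phiS b l (r*l))^2 + 4*(r*l)*(b i + l)) + phiS b l (r*l)) / l)) atTop
      (nhds 1) := by rw [show (1:ℝ) = 2/2 by norm_num]; exact h
  refine h2.congr' ?_
  filter_upwards [eventually_gt_atTop (0:ℝ), ev_den_pos b r hr i] with l l0 hden
  field_simp

end IFEBMaux


open IFEBMaux

/-- complete stress relaxation for infinitely large time steps:
with `λ = Δt·c₁₀/η` and `ε = Δt·c₀₁/η`, the IFEBM update satisfies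
`X(Δt) → I` and `Cᵢ(Δt) → C̄` as `Δt → ∞`. -/
theorem ifebm_complete_relaxation (C Ci0 : Mat) (hC : C.PosDef) (hCi0 : Ci0.PosDef)
    (h1 : Ci0.det = 1) (c10 c01 η : ℝ) (hc10 : 0 < c10) (hc01 : 0 ≤ c01) (hη : 0 < η) :
    Tendsto (fun dt : ℝ => ifebmX (dt * c10 / η) (dt * c01 / η) C Ci0) atTop
        (nhds (1 : Mat)) ∧
      Tendsto (fun dt : ℝ => ifebmCi (dt * c10 / η) (dt * c01 / η) C Ci0) atTop
        (nhds (unimod C)) := by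
  classical
  have hCb : (unimod C).PosDef := posDef_smul hC (Real.rpow_pos_of_pos hC.det_pos _)
  have hCbdet : (unimod C).det = 1 := unimod_det hC
  set S : Mat := msqrt (unimod C) with hSdef
  have hSpsd : S.PosSemidef := by
    exact msqrt_psd hCb.posSemidef
  have hSS : S * S = unimod C := by
    exact msqrt_mul_self hCb.posSemidef
  have hSdetne : S.det ≠ 0 := by
    intro h
    have h2 := congrArg Matrix.det hSS
    rw [det_mul, h, mul_zero, hCbdet] at h2
    norm_num at h2
  have hSiS : S⁻¹ * S = 1 := nonsing_inv_mul S hSdetne.isUnit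
  have hSSi : S * S⁻¹ = 1 := mul_nonsing_inv S hSdetne.isUnit
  have hSih : (S⁻¹)ᴴ = S⁻¹ := by rw [conjTranspose_nonsing_inv, hSpsd.1.eq]
  set B : Mat := S⁻¹ * Ci0 * S⁻¹ with hBdef
  have hBh : B.IsHermitian := by
    unfold Matrix.IsHermitian
    rw [hBdef, conjTranspose_mul, conjTranspose_mul, hSih, hCi0.1.eq, ← mul_assoc]
  have hIc : S⁻¹ * (unimod C) * S⁻¹ = 1 := by
    rw [← hSS, show S⁻¹ * (S * S) * S⁻¹ = (S⁻¹ * S) * (S * S⁻¹) by noncomm_ring,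
      hSiS, hSSi, one_mul]
  have hAeq : ∀ lam : ℝ, ifebmA lam C Ci0 = B + lam • (1 : Mat) := by
    intro lam
    rw [ifebmA, ← hSdef]
    have h2 : S⁻¹ * (Ci0 + lam • unimod C) * S⁻¹
        = S⁻¹ * Ci0 * S⁻¹ + lam • (S⁻¹ * unimod C * S⁻¹) := by
      rw [mul_add, add_mul, Matrix.mul_smul, Matrix.smul_mul]
    rw [h2, hIc, ← hBdef]
  set U : Mat := (Matrix.IsHermitian.eigenvectorUnitary hBh : Mat) with hUdef
  set b : Fin 3 → ℝ := hBh.eigenvalues with hbdef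
  have hU1 : U * star U = 1 :=
    mem_unitaryGroup_iff.mp (Matrix.IsHermitian.eigenvectorUnitary hBh).2
  have hU2 : star U * U = 1 :=
    mem_unitaryGroup_iff'.mp (Matrix.IsHermitian.eigenvectorUnitary hBh).2
  have hspec : B = U * diagonal b * star U := by
    have h := hBh.spectral_theorem
    simpa using h
  have hAdiag : ∀ lam : ℝ, ifebmA lam C Ci0 = U * diagonal (fun i => b i + lam) * star U := by
    intro lam
    rw [hAeq, hspec, uc_one hU1, uc_smul, uc_add]
    have h2 : (b + lam • (1 : Fin 3 → ℝ)) = fun i => b i + lam := by funext i; simp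
    rw [h2]
  have hAdet : ∀ lam : ℝ, (ifebmA lam C Ci0).det = ∏ i, (b i + lam) := fun lam => by
    rw [hAdiag, uc_det hU2]
  have hAtr : ∀ lam : ℝ, (ifebmA lam C Ci0).trace = ∑ i, (b i + lam) := fun lam => by
    rw [hAdiag, uc_trace hU2]
  have hphi : ∀ lam eps : ℝ, ifebmPhi lam eps C Ci0 = phiS b lam eps := by
    intro lam eps
    rw [ifebmPhi, hAdet, hAtr, phiS]
  have hX : ∀ lam eps : ℝ,
      (∀ i, 0 ≤ (phiS b lam eps)^2 + 4*eps*(b i + lam)) →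
      (∀ i, 0 < Real.sqrt ((phiS b lam eps)^2 + 4*eps*(b i + lam)) + phiS b lam eps) →
      ifebmX lam eps C Ci0 = U * diagonal (fun i =>
        2*(b i + lam) /
          (Real.sqrt ((phiS b lam eps)^2 + 4*eps*(b i + lam)) + phiS b lam eps)) * star U := by
    intro lam eps h0 hpos
    rw [ifebmX, hphi, hAdiag]
    have harg : ifebmPhi lam eps C Ci0 ^ 2 • (1:Mat)
          + (4*eps) • (U * diagonal (fun i => b i + lam) * star U)
        = U * diagonal (fun i => (phiS b lam eps)^2 + 4*eps*(b i + lam)) * star U := by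
      rw [hphi, uc_one hU1, uc_smul, uc_smul, uc_add]
      have h2 : ((phiS b lam eps ^ 2) • (1 : Fin 3 → ℝ) + (4*eps) • fun i => b i + lam)
          = fun i => (phiS b lam eps)^2 + 4*eps*(b i + lam) := by
        funext i
        simp [mul_comm]
      rw [h2]
    rw [hphi] at harg
    rw [harg, uc_msqrt hU2 h0]
    have hsum : (U * diagonal (fun i => Real.sqrt ((phiS b lam eps)^2 + 4*eps*(b i + lam)))
            * star U) + phiS b lam eps • (1:Mat)
        = U * diagonal (fun i =>
            Real.sqrt ((phiS b lam eps)^2 + 4*eps*(b i + lam)) + phiS b lam eps) * star U := by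
      rw [uc_one hU1, uc_smul, uc_add]
      have h2 : ((fun i => Real.sqrt ((phiS b lam eps)^2 + 4*eps*(b i + lam)))
            + phiS b lam eps • (1 : Fin 3 → ℝ))
          = fun i => Real.sqrt ((phiS b lam eps)^2 + 4*eps*(b i + lam)) + phiS b lam eps := by
        funext i; simp
      rw [h2]
    rw [hsum, uc_inv hU1 hU2 (fun i => (hpos i).ne')]
    have h2A : (2:ℝ) • (U * diagonal (fun i => b i + lam) * star U)
        = U * diagonal (fun i => 2*(b i + lam)) * star U := by
      rw [uc_smul]
      have h2 : ((2:ℝ) • fun i => b i + lam) = fun i => 2*(b i + lam) := by funext i; simp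
      rw [h2]
    rw [h2A, uc_mul hU2]
    have h2 : ((fun i => 2*(b i + lam)) * (fun i =>
          Real.sqrt ((phiS b lam eps)^2 + 4*eps*(b i + lam)) + phiS b lam eps)⁻¹)
        = fun i => 2*(b i + lam) /
          (Real.sqrt ((phiS b lam eps)^2 + 4*eps*(b i + lam)) + phiS b lam eps) := by
      funext i; simp [div_eq_mul_inv]
    rw [h2]
  set r : ℝ := c01 / c10 with hrdef
  have hr : 0 ≤ r := div_nonneg hc01 hc10.le
  have hl : Tendsto (fun dt : ℝ => dt * c10 / η) atTop atTop := by
    have h := Tendsto.atTop_mul_const (div_pos hc10 hη) (tendsto_id (α := ℝ))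
    refine h.congr fun dt => ?_
    simp [mul_div_assoc]
  have he : ∀ dt : ℝ, dt * c01 / η = r * (dt * c10 / η) := by
    intro dt
    rw [hrdef]
    field_simp
  have hXlim : Tendsto (fun dt : ℝ => ifebmX (dt * c10 / η) (dt * c01 / η) C Ci0) atTop
      (nhds 1) := by
    have hcont : Continuous (fun d : Fin 3 → ℝ => U * diagonal d * star U) :=
      (continuous_const.matrix_mul continuous_id.matrix_diagonal).matrix_mul continuous_const
    have hdlim : Tendsto (fun dt : ℝ => fun i : Fin 3 =>
        2*(b i + dt * c10 / η) /
          (Real.sqrt ((phiS b (dt * c10 / η) (r * (dt * c10 / η)))^2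
              + 4*(r * (dt * c10 / η))*(b i + dt * c10 / η))
            + phiS b (dt * c10 / η) (r * (dt * c10 / η)))) atTop
        (nhds fun _ => 1) :=
      tendsto_pi_nhds.mpr fun i => (lim_x b r hr i).comp hl
    have h := (hcont.tendsto _).comp hdlim
    have hval : U * diagonal (fun _ : Fin 3 => (1:ℝ)) * star U = 1 := by
      rw [diagonal_one, mul_one, hU1]
    rw [hval] at h
    refine h.congr' ?_
    filter_upwards [hl.eventually (ev_inner_pos b r hr 0), hl.eventually (ev_inner_pos b r hr 1),
      hl.eventually (ev_inner_pos b r hr 2), hl.eventually (ev_den_pos b r hr 0),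
      hl.eventually (ev_den_pos b r hr 1), hl.eventually (ev_den_pos b r hr 2)]
      with dt p0 p1 p2 q0 q1 q2
    have h0 : ∀ i, 0 ≤ (phiS b (dt * c10 / η) (r * (dt * c10 / η)))^2
        + 4*(r * (dt * c10 / η))*(b i + dt * c10 / η) := by
      intro i; fin_cases i
      exacts [p0.le, p1.le, p2.le]
    have hps : ∀ i, 0 < Real.sqrt ((phiS b (dt * c10 / η) (r * (dt * c10 / η)))^2
        + 4*(r * (dt * c10 / η))*(b i + dt * c10 / η))
        + phiS b (dt * c10 / η) (r * (dt * c10 / η)) := by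
      intro i; fin_cases i
      exacts [q0, q1, q2]
    rw [Function.comp_apply, he dt, hX (dt * c10 / η) (r * (dt * c10 / η)) h0 hps]
  refine ⟨hXlim, ?_⟩
  have hCC : msqrt C * msqrt C = C := by
    exact msqrt_mul_self hC.posSemidef
  have hg : Tendsto (fun dt : ℝ =>
      msqrt C * ifebmX (dt * c10 / η) (dt * c01 / η) C Ci0 * msqrt C) atTop (nhds C) := by
    have hcont : Continuous (fun M : Mat => msqrt C * M * msqrt C) :=
      (continuous_const.matrix_mul continuous_id).matrix_mul continuous_const
    have h := (hcont.tendsto 1).comp hXlim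
    simp only [mul_one] at h
    rw [hCC] at h
    exact h.congr fun dt => rfl
  have hu : ContinuousAt unimod C := by
    have hrw : unimod = fun M : Mat => (M.det ^ (-(1:ℝ)/3)) • M := rfl
    rw [hrw]
    have hdet : ContinuousAt (fun M : Mat => M.det ^ (-(1:ℝ)/3)) C :=
      (Real.continuousAt_rpow_const _ _ (Or.inl hC.det_pos.ne')).comp
        (continuous_id.matrix_det).continuousAt
    exact hdet.smul continuousAt_id
  have h := hu.tendsto.comp hg
  exact h.congr fun dt => rfl
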